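/- Let F be a GIFS of order m on a complete metric space X with attractor A_F, all of whose maps share the witness function φ, and let c := max{Lip(f) : f ∈ F} < 1. If K₀ = ... = K_{m-1} = K for some nonempty compact K, and (K_k) is defined by K_{k+m} := F(K_k,...,K_{k+m-1}), then for every k ≥ 0, H(K_k, A_F) ≤ c^⌊k/m⌋ · H(K, A_F). -/

import Mathlib

open TopologicalSpace Metric EMetric ENNReal

private lemma side_aux {X : Type*} [MetricSpace X] {n m : ℕ}
    (f : Fin n → (Fin m → X) → X) (r : Fin n → NNReal)
    (hf : ∀ i, LipschitzWith (r i) (f i)) (c : NNReal) (hr : ∀ i, r i ≤ c)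
    (D E : Fin m → Set X) (hEc : ∀ j, IsCompact (E j)) (hEn : ∀ j, (E j).Nonempty)
    (B : ℝ≥0∞) (hB : ∀ j, hausdorffEdist (D j) (E j) ≤ B) :
    ∀ x ∈ ⋃ i, f i '' Set.pi Set.univ D, ∃ y ∈ ⋃ i, f i '' Set.pi Set.univ E,
      edist x y ≤ (c : ℝ≥0∞) * B := by
  rintro x hx
  simp only [Set.mem_iUnion, Set.mem_image] at hx
  obtain ⟨i, p, hp, rfl⟩ := hx
  have hq : ∀ j : Fin m, ∃ q ∈ E j, edist (p j) q ≤ B := by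
    intro j
    obtain ⟨q, hqE, hq⟩ := (hEc j).exists_infEdist_eq_edist (hEn j) (p j)
    exact ⟨q, hqE, by
      rw [← hq]
      exact le_trans (infEdist_le_hausdorffEdist_of_mem (hp j (Set.mem_univ j))) (hB j)⟩
  choose q hqE hqd using hq
  refine ⟨f i q, Set.mem_iUnion.2 ⟨i, Set.mem_image_of_mem _ (fun j _ => hqE j)⟩, ?_⟩
  calc edist (f i p) (f i q) ≤ (r i : ℝ≥0∞) * edist p q := (hf i).edist_le_mul p q
    _ ≤ (c : ℝ≥0∞) * B := by
        gcongr
        · exact hr i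
        · exact edist_pi_le_iff.2 hqd

private lemma step_aux {X : Type*} [MetricSpace X] {n m : ℕ}
    (f : Fin n → (Fin m → X) → X) (r : Fin n → NNReal)
    (hf : ∀ i, LipschitzWith (r i) (f i)) (c : NNReal) (hr : ∀ i, r i ≤ c)
    (D E : Fin m → Set X)
    (hDc : ∀ j, IsCompact (D j)) (hDn : ∀ j, (D j).Nonempty)
    (hEc : ∀ j, IsCompact (E j)) (hEn : ∀ j, (E j).Nonempty)
    (B : ℝ≥0∞) (hB : ∀ j, hausdorffEdist (D j) (E j) ≤ B) :
    hausdorffEdist (⋃ i, f i '' Set.pi Set.univ D) (⋃ i, f i '' Set.pi Set.univ E)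
      ≤ (c : ℝ≥0∞) * B := by
  refine hausdorffEdist_le_of_mem_edist
    (side_aux f r hf c hr D E hEc hEn B hB)
    (side_aux f r hf c hr E D hDc hDn B fun j => ?_)
  exact (hausdorffEDist_comm).trans_le (hB j)

/-- Speed of convergence for a GIFS of Lipschitz maps with `c := max Lip(fᵢ) < 1`:
if `K₀ = ... = K_{m-1} = K` and `K_{k+m} = F(K_k,...,K_{k+m-1})`, then
`H(K_k, A_F) ≤ c^⌊k/m⌋ · H(K, A_F)`. -/
theorem stmt5 {X : Type*} [MetricSpace X] [CompleteSpace X]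
    {n m : ℕ} (hn : 0 < n) (hm : 0 < m)
    (f : Fin n → (Fin m → X) → X) (r : Fin n → NNReal)
    (hf : ∀ i, LipschitzWith (r i) (f i))
    (hc : Finset.univ.sup r < 1)
    (A : NonemptyCompacts X)
    (hA : (A : Set X) = ⋃ i, f i '' Set.pi Set.univ (fun _ : Fin m => (A : Set X)))
    (K₀ : NonemptyCompacts X) (K : ℕ → NonemptyCompacts X)
    (hinit : ∀ j < m, K j = K₀)
    (hK : ∀ k, (K (k + m) : Set X) =
        ⋃ i, f i '' Set.pi Set.univ (fun j : Fin m => (K (k + j) : Set X))) :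
    ∀ k, dist (K k) A ≤ ((Finset.univ.sup r : NNReal) : ℝ) ^ (k / m) * dist K₀ A := by
  set c : NNReal := Finset.univ.sup r with hcdef
  have hr : ∀ i, r i ≤ c := fun i => Finset.le_sup (Finset.mem_univ i)
  have hc1 : (c : ℝ≥0∞) ≤ 1 := by exact_mod_cast hc.le
  have hfin : ∀ (s : NonemptyCompacts X),
      hausdorffEdist (s : Set X) (A : Set X) ≠ ⊤ := fun s =>
    hausdorffEdist_ne_top_of_nonempty_of_bounded s.nonempty A.nonempty
      s.isCompact.isBounded A.isCompact.isBounded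
  have key : ∀ k, hausdorffEdist (K k : Set X) (A : Set X)
      ≤ (c : ℝ≥0∞) ^ (k / m) * hausdorffEdist (K₀ : Set X) (A : Set X) := by
    intro k
    induction k using Nat.strong_induction_on with
    | _ k ih =>
      by_cases hkm : k < m
      · rw [hinit k hkm, Nat.div_eq_of_lt hkm, pow_zero, one_mul]
      · push_neg at hkm
        obtain ⟨k', rfl⟩ : ∃ k', k = k' + m := ⟨k - m, (Nat.sub_add_cancel hkm).symm⟩
        rw [hK k']
        conv_lhs => rw [hA]
        have hmain := step_aux f r hf c hr
          (fun j : Fin m => (K (k' + j) : Set X)) (fun _ : Fin m => (A : Set X))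
          (fun j => (K (k' + j)).isCompact) (fun j => (K (k' + j)).nonempty)
          (fun _ => A.isCompact) (fun _ => A.nonempty)
          ((c : ℝ≥0∞) ^ (k' / m) * hausdorffEdist (K₀ : Set X) (A : Set X))
          (fun j => by
            refine le_trans (ih (k' + j) (by omega)) ?_
            exact mul_le_mul_left
              (pow_le_pow_of_le_one zero_le hc1
                (Nat.div_le_div_right (Nat.le_add_right _ _))) _)
        refine le_trans hmain (le_of_eq ?_)
        rw [Nat.add_div_right k' hm, pow_succ, ← mul_assoc, mul_comm ((c:ℝ≥0∞) ^ (k'/m)) c]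
  intro k
  have h := key k
  have hrhs : (c : ℝ≥0∞) ^ (k / m) * hausdorffEdist (K₀ : Set X) (A : Set X) ≠ ⊤ :=
    ENNReal.mul_ne_top (ENNReal.pow_ne_top ENNReal.coe_ne_top) (hfin K₀)
  have h' := ENNReal.toReal_le_toReal (hfin (K k)) hrhs |>.2 h
  rw [ENNReal.toReal_mul, ENNReal.toReal_pow, ENNReal.coe_toReal] at h'
  simpa only [NonemptyCompacts.dist_eq, hausdorffDist, hausdorffEdist] using h'
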